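/- arXiv:2006.15522 — 4 statements merged into one kernel-verified Lean document; each statement's English description precedes it below -/
import Mathlib

section
/- Under the ERM setting, for each i, E_S[I[f_{S_i}]] - inf_{f∈H} I[f] ≤ E_S[V(f_{S_i}, z_i) - V(f_S, z_i)], where S_i is the training set S with the i-th point removed. That is, the expected excess risk of the leave-one-out ERM solution is bounded by the expected CV_loo stability. -/
open MeasureTheory

/-- Excess risk & CV_loo stability: the expected excess risk of the leave-one-out ERM
solution is bounded by the expected CV_loo stability:
`E_S[I[f_{S_i}]] - inf_{f∈H} I[f] ≤ E_S[V(f_{S_i}, z_i) - V(f_S, z_i)]`. -/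
theorem excess_risk_le_cvloo_stability {Z H : Type*} [MeasurableSpace Z] [Nonempty H]
    (μ : Measure Z) [IsProbabilityMeasure μ]
    (n : ℕ) (hn : 0 < n) (i : Fin n)
    (V : H → Z → ℝ) (hVnn : ∀ f z, 0 ≤ V f z)
    (erm : (Fin n → Z) → H)
    (ermLoo : Fin n → (Fin n → Z) → H)
    -- `erm S` is an empirical risk minimizer on `S`
    (hERM : ∀ (S : Fin n → Z) (f : H), ∑ j, V (erm S) (S j) ≤ ∑ j, V f (S j))
    -- `erm` is a symmetric algorithm
    (hERMsym : ∀ (S : Fin n → Z) (σ : Equiv.Perm (Fin n)), erm (S ∘ σ) = erm S)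
    -- `ermLoo i S` is an empirical risk minimizer on the leave-one-out dataset `S_i`
    (hLooERM : ∀ (S : Fin n → Z) (f : H),
      ∑ j ∈ Finset.univ.erase i, V (ermLoo i S) (S j)
        ≤ ∑ j ∈ Finset.univ.erase i, V f (S j))
    -- `ermLoo i S` does not depend on the removed point `z_i`
    (hLooIndep : ∀ S S' : Fin n → Z, (∀ j, j ≠ i → S j = S' j) → ermLoo i S = ermLoo i S')
    (hInt1 : Integrable (fun S : Fin n → Z => ∫ z, V (ermLoo i S) z ∂μ)
      (Measure.pi fun _ : Fin n => μ))
    (hInt2 : Integrable (fun S : Fin n → Z => V (ermLoo i S) (S i))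
      (Measure.pi fun _ : Fin n => μ))
    (hInt3 : Integrable (fun S : Fin n → Z => V (erm S) (S i))
      (Measure.pi fun _ : Fin n => μ))
    (hIntV : ∀ f : H, Integrable (V f) μ) :
    (∫ S, ∫ z, V (ermLoo i S) z ∂μ ∂(Measure.pi fun _ : Fin n => μ))
        - ⨅ f : H, ∫ z, V f z ∂μ
      ≤ ∫ S, (V (ermLoo i S) (S i) - V (erm S) (S i))
          ∂(Measure.pi fun _ : Fin n => μ) := by
  obtain ⟨m, rfl⟩ : ∃ m, n = m + 1 := ⟨n - 1, (Nat.succ_pred_eq_of_pos hn).symm⟩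
  have hZ : Nonempty Z := by
    by_contra h
    rw [not_nonempty_iff] at h
    have h1 : μ Set.univ = 1 := measure_univ
    rw [Set.univ_eq_empty_iff.mpr h, measure_empty] at h1
    exact zero_ne_one h1
  obtain ⟨x₀⟩ := hZ
  set π : Measure (Fin (m + 1) → Z) := Measure.pi fun _ => μ with hπ
  set π' : Measure (Fin m → Z) := Measure.pi fun _ => μ with hπ'
  -- the measurable equivalence splitting off coordinate `i`, put second
  set e : (Fin (m + 1) → Z) ≃ᵐ (Fin m → Z) × Z :=
    (MeasurableEquiv.piFinSuccAbove (fun _ => Z) i).trans MeasurableEquiv.prodComm with he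
  have mpe : MeasurePreserving (⇑e) π (π'.prod μ) := by
    have h1 := measurePreserving_piFinSuccAbove (fun _ : Fin (m + 1) => μ) i
    have h2 : MeasurePreserving Prod.swap (μ.prod π') (π'.prod μ) := Measure.measurePreserving_swap
    exact h2.comp h1
  have hesymm : ∀ q : (Fin m → Z) × Z, e.symm q = i.insertNth q.2 q.1 := fun q => rfl
  -- change of variables for arbitrary integrands
  have hcov : ∀ G : (Fin (m + 1) → Z) → ℝ,
      ∫ S, G S ∂π = ∫ q, G (e.symm q) ∂(π'.prod μ) := by
    intro G
    have := mpe.integral_comp e.measurableEmbedding (fun S => G (e.symm S))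
    simpa using this
  have hcovInt : ∀ G : (Fin (m + 1) → Z) → ℝ, Integrable G π →
      Integrable (fun q => G (e.symm q)) (π'.prod μ) := fun G hG =>
    ((MeasurePreserving.symm e mpe).integrable_comp_emb e.symm.measurableEmbedding (g := G)).mpr hG
  -- the leave-one-out hypothesis depends only on the non-`i` coordinates
  set M : (Fin m → Z) → H := fun T => ermLoo i (i.insertNth x₀ T) with hM
  have hMkey : ∀ (x : Z) (T : Fin m → Z), ermLoo i (i.insertNth x T) = M T := by
    intro x T
    apply hLooIndep
    intro j hj
    obtain ⟨k, rfl⟩ := Fin.exists_succAbove_eq hj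
    simp
  -- Lemma A : `E_S[I[f_{S_i}]] = E_S[V (f_{S_i}) z_i]`
  have hA : ∫ S, ∫ z, V (ermLoo i S) z ∂μ ∂π = ∫ S, V (ermLoo i S) (S i) ∂π := by
    have hIL : Integrable (fun q : (Fin m → Z) × Z => ∫ z, V (M q.1) z ∂μ) (π'.prod μ) :=
      (hcovInt _ hInt1).congr
        (Filter.Eventually.of_forall fun q => by simp [hesymm, hMkey])
    have hIR : Integrable (fun q : (Fin m → Z) × Z => V (M q.1) q.2) (π'.prod μ) :=
      (hcovInt _ hInt2).congr
        (Filter.Eventually.of_forall fun q => by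
          simp [hesymm, hMkey, Fin.insertNth_apply_same])
    rw [hcov (fun S => ∫ z, V (ermLoo i S) z ∂μ), hcov (fun S => V (ermLoo i S) (S i))]
    simp only [hesymm, hMkey, Fin.insertNth_apply_same]
    rw [integral_prod _ hIL, integral_prod _ hIR]
    refine integral_congr_ae (Filter.Eventually.of_forall fun T => ?_)
    simp
  -- symmetry: the expected loss at coordinate `j` equals that at coordinate `i`
  have hswapAll : ∀ j : Fin (m + 1),
      (∫ S, V (erm S) (S j) ∂π = ∫ S, V (erm S) (S i) ∂π) ∧
        Integrable (fun S => V (erm S) (S j)) π := by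
    intro j
    set σ : Equiv.Perm (Fin (m + 1)) := Equiv.swap i j with hσ
    set E : (Fin (m + 1) → Z) ≃ᵐ (Fin (m + 1) → Z) :=
      MeasurableEquiv.piCongrLeft (fun _ => Z) σ with hE
    have mpE : MeasurePreserving (⇑E) π π := measurePreserving_piCongrLeft (fun _ => μ) σ
    have hEapp : ∀ (S : Fin (m + 1) → Z), E S = S ∘ ⇑σ.symm := by
      intro S
      funext k
      have h1 := MeasurableEquiv.piCongrLeft_apply_apply (β := fun _ : Fin (m + 1) => Z)
        σ S (σ.symm k)
      simp only [Equiv.apply_symm_apply] at h1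
      rw [hE]
      simpa using h1
    have key : ∀ S : Fin (m + 1) → Z, V (erm (E S)) (E S i) = V (erm S) (S j) := by
      intro S
      rw [hEapp, hERMsym S σ.symm]
      have : σ.symm i = j := by simp [hσ]
      simp [Function.comp, this]
    constructor
    · calc ∫ S, V (erm S) (S j) ∂π
          = ∫ S, V (erm (E S)) (E S i) ∂π :=
            integral_congr_ae (Filter.Eventually.of_forall fun S => (key S).symm)
        _ = ∫ S, V (erm S) (S i) ∂π :=
            mpE.integral_comp E.measurableEmbedding (fun S => V (erm S) (S i))
    · have h2 : Integrable ((fun S => V (erm S) (S i)) ∘ ⇑E) π :=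
        (mpE.integrable_comp_emb E.measurableEmbedding).mpr hInt3
      exact h2.congr (Filter.Eventually.of_forall fun S => key S)
  -- evaluation maps are measure preserving
  have hmap : ∀ j : Fin (m + 1), Measure.map (fun S : Fin (m + 1) → Z => S j) π = μ := by
    intro j
    have h1 := (measurePreserving_piFinSuccAbove (fun _ : Fin (m + 1) => μ) j).map_eq
    have h2 : (fun S : Fin (m + 1) → Z => S j)
        = Prod.fst ∘ ⇑(MeasurableEquiv.piFinSuccAbove (fun _ => Z) j) := rfl
    have h3 := Measure.map_map (μ := π) (measurable_fst (β := Fin m → Z))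
      (MeasurableEquiv.piFinSuccAbove (fun _ : Fin (m + 1) => Z) j).measurable
    rw [h2, ← h3, h1, Measure.map_fst_prod]
    simp
  have hval : ∀ (f : H) (j : Fin (m + 1)), ∫ S, V f (S j) ∂π = ∫ z, V f z ∂μ := by
    intro f j
    have h1 := integral_map (μ := π) (φ := fun S : Fin (m + 1) → Z => S j)
      (measurable_pi_apply j).aemeasurable (f := V f)
      (by rw [hmap j]; exact (hIntV f).aestronglyMeasurable)
    rw [hmap j] at h1
    exact h1.symm
  have hIntfj : ∀ (f : H) (j : Fin (m + 1)), Integrable (fun S => V f (S j)) π := by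
    intro f j
    have h1 : Integrable (V f) (Measure.map (fun S : Fin (m + 1) → Z => S j) π) := by
      rw [hmap j]; exact hIntV f
    exact (integrable_map_measure h1.aestronglyMeasurable
      (measurable_pi_apply j).aemeasurable).mp h1
  -- Lemma B : `E_S[V (f_S) z_i] ≤ I[f]` for every `f`
  have hB : ∀ f : H, ∫ S, V (erm S) (S i) ∂π ≤ ∫ z, V f z ∂μ := by
    intro f
    have hsum : ∑ j : Fin (m + 1), ∫ S, V (erm S) (S j) ∂π
        ≤ ∑ j : Fin (m + 1), ∫ S, V f (S j) ∂π := by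
      rw [← integral_finset_sum _ (fun j _ => (hswapAll j).2),
        ← integral_finset_sum _ (fun j _ => hIntfj f j)]
      exact integral_mono (integrable_finset_sum _ fun j _ => (hswapAll j).2)
        (integrable_finset_sum _ fun j _ => hIntfj f j) (fun S => hERM S f)
    have h1 : ∑ j : Fin (m + 1), ∫ S, V (erm S) (S j) ∂π
        = (m + 1 : ℕ) • ∫ S, V (erm S) (S i) ∂π := by
      rw [Finset.sum_congr rfl fun j _ => (hswapAll j).1, Finset.sum_const,
        Finset.card_univ, Fintype.card_fin]
    have h2 : ∑ j : Fin (m + 1), ∫ S, V f (S j) ∂π = (m + 1 : ℕ) • ∫ z, V f z ∂μ := by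
      rw [Finset.sum_congr rfl fun j _ => hval f j, Finset.sum_const,
        Finset.card_univ, Fintype.card_fin]
    rw [h1, h2, nsmul_eq_mul, nsmul_eq_mul] at hsum
    exact le_of_mul_le_mul_left hsum (by positivity)
  have hBinf : ∫ S, V (erm S) (S i) ∂π ≤ ⨅ f : H, ∫ z, V f z ∂μ := le_ciInf hB
  rw [integral_sub hInt2 hInt3, hA]
  linarith
end

section
/- Let K ∈ ℝ^{n×n} be symmetric positive definite (hence invertible), b the i-th standard basis vector, a = −Kb, K* = K + a bᵀ. Then with k = K^{-1}a = −b and h = bᵀK^{-1}: (i) 1 + bᵀK^{-1}a = 0; (ii) the Moore–Penrose pseudoinverse of K* is K*^† = K^{-1} − K^{-1} h^† h, where h^† = hᵀ/‖h‖²; (iii) K*^† K* = I − k k^† = I − b bᵀ. -/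
open Matrix

/-- `B` satisfies the four Moore–Penrose conditions for `A`. -/
def IsMoorePenrose {d n : ℕ} (A : Matrix (Fin d) (Fin n) ℝ)
    (B : Matrix (Fin n) (Fin d) ℝ) : Prop :=
  A * B * A = A ∧ B * A * B = B ∧ (A * B)ᵀ = A * B ∧ (B * A)ᵀ = B * A

section helpers

variable {m n p : Type*} [Fintype m] [Fintype n] [Fintype p]

lemma mul_vecMulVec' (M : Matrix m n ℝ) (u : n → ℝ) (v : p → ℝ) :
    M * Matrix.vecMulVec u v = Matrix.vecMulVec (M.mulVec u) v := by
  ext i j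
  simp only [Matrix.mul_apply, Matrix.vecMulVec_apply, Matrix.mulVec, dotProduct,
    Finset.sum_mul]
  exact Finset.sum_congr rfl fun k _ => by ring

lemma vecMulVec_mul' (u : m → ℝ) (v : n → ℝ) (M : Matrix n p ℝ) :
    Matrix.vecMulVec u v * M = Matrix.vecMulVec u (Matrix.vecMul v M) := by
  ext i j
  simp only [Matrix.mul_apply, Matrix.vecMulVec_apply, Matrix.vecMul, dotProduct,
    Finset.mul_sum]
  exact Finset.sum_congr rfl fun k _ => by ring

lemma vecMul_vecMulVec' (v : n → ℝ) (x : n → ℝ) (y : p → ℝ) :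
    Matrix.vecMul v (Matrix.vecMulVec x y) = (dotProduct v x) • y := by
  funext j
  simp only [Matrix.vecMul, Matrix.vecMulVec_apply, dotProduct, Pi.smul_apply,
    smul_eq_mul, Finset.sum_mul]
  exact Finset.sum_congr rfl fun k _ => by ring

lemma smul_vecMulVec' (c : ℝ) (u : m → ℝ) (v : p → ℝ) :
    Matrix.vecMulVec (c • u) v = c • Matrix.vecMulVec u v := by
  ext i j
  simp [Matrix.vecMulVec_apply, mul_assoc]

lemma vecMulVec_smul' (c : ℝ) (u : m → ℝ) (v : p → ℝ) :
    Matrix.vecMulVec u (c • v) = c • Matrix.vecMulVec u v := by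
  ext i j
  simp [Matrix.vecMulVec_apply]
  ring

lemma neg_vecMulVec' (u : m → ℝ) (v : p → ℝ) :
    Matrix.vecMulVec (-u) v = -Matrix.vecMulVec u v := by
  ext i j
  simp [Matrix.vecMulVec_apply]

lemma vecMulVec_zero' (u : m → ℝ) :
    Matrix.vecMulVec u (0 : p → ℝ) = 0 := by
  ext i j
  simp [Matrix.vecMulVec_apply]

lemma vecMulVec_transpose' (u : m → ℝ) (v : p → ℝ) :
    (Matrix.vecMulVec u v)ᵀ = Matrix.vecMulVec v u := by
  ext i j
  simp [Matrix.vecMulVec_apply, mul_comm]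

end helpers

/-- Meyer's rank-one pseudoinverse update for `K* = K + a bᵀ` with `K` symmetric positive
definite, `b = e_i`, `a = −Kb`: with `k = K⁻¹a = −b` and `h = bᵀK⁻¹`,
(i) `1 + bᵀK⁻¹a = 0`; (ii) `K*^† = K⁻¹ − K⁻¹h^†h` where `h^† = hᵀ/‖h‖²`;
(iii) `K*^† K* = I − kk^† = I − bbᵀ`. -/
theorem meyer_rank_one_update {n : ℕ} (K : Matrix (Fin n) (Fin n) ℝ)
    (hK : K.PosDef) (i : Fin n) :
    let b : Fin n → ℝ := Pi.single i 1
    let a : Fin n → ℝ := -(K.mulVec b)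
    let Kstar : Matrix (Fin n) (Fin n) ℝ := K + Matrix.vecMulVec a b
    let h : Fin n → ℝ := Matrix.vecMul b K⁻¹
    let hdag : Fin n → ℝ := (∑ j, h j ^ 2)⁻¹ • h
    let P : Matrix (Fin n) (Fin n) ℝ := K⁻¹ - K⁻¹ * Matrix.vecMulVec hdag h
    (1 + dotProduct b (K⁻¹.mulVec a) = 0) ∧
    (K⁻¹.mulVec a = -b) ∧
    IsMoorePenrose Kstar P ∧
    P * Kstar = 1 - Matrix.vecMulVec b b := by
  intro b a Kstar h hdag P
  have hb : b = Pi.single i 1 := rfl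
  have ha : a = -(K.mulVec b) := rfl
  have hKs : Kstar = K + Matrix.vecMulVec a b := rfl
  have hh : h = Matrix.vecMul b K⁻¹ := rfl
  have hdagdef : hdag = (∑ j, h j ^ 2)⁻¹ • h := rfl
  have hPdef : P = K⁻¹ - K⁻¹ * Matrix.vecMulVec hdag h := rfl
  set c : ℝ := (∑ j, h j ^ 2)⁻¹ with hc
  have hd0 : K.det ≠ 0 := hK.det_pos.ne'
  have hKinv : K⁻¹ * K = 1 := Matrix.nonsing_inv_mul K (isUnit_iff_ne_zero.mpr hd0)
  have hKinv' : K * K⁻¹ = 1 := Matrix.mul_nonsing_inv K (isUnit_iff_ne_zero.mpr hd0)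
  have hsym : Kᵀ = K := (by simpa using hK.isHermitian : K.IsSymm)
  have hsyminv : K⁻¹ᵀ = K⁻¹ := by rw [Matrix.transpose_nonsing_inv, hsym]
  have hbb : dotProduct b b = 1 := by
    simp [hb, dotProduct, Pi.single_apply]
  -- claim (ii)
  have claim2 : K⁻¹.mulVec a = -b := by
    rw [ha, Matrix.mulVec_neg, Matrix.mulVec_mulVec, hKinv, Matrix.one_mulVec]
  -- claim (i)
  have claim1 : 1 + dotProduct b (K⁻¹.mulVec a) = 0 := by
    rw [claim2, dotProduct_neg, hbb]; ring
  -- vector facts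
  have hvhK : Matrix.vecMul h K = b := by
    rw [hh, Matrix.vecMul_vecMul, hKinv, Matrix.vecMul_one]
  have hhh : dotProduct h h = ∑ j, h j ^ 2 := by
    simp [dotProduct, sq]
  have hsne : (∑ j, h j ^ 2) ≠ 0 := by
    intro h0
    have hzero : ∀ j, h j = 0 := by
      intro j
      have := (Finset.sum_eq_zero_iff_of_nonneg
        (fun j _ => sq_nonneg (h j))).mp h0 j (Finset.mem_univ j)
      exact pow_eq_zero_iff two_ne_zero |>.mp this
    have hbi : b i = 0 := by
      rw [← hvhK]
      simp [Matrix.vecMul, dotProduct, hzero]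
    rw [hb] at hbi
    simp at hbi
  have hch : c * dotProduct h h = 1 := by
    rw [hhh, hc]; exact inv_mul_cancel₀ hsne
  -- matrix abbreviations
  set B : Matrix (Fin n) (Fin n) ℝ := Matrix.vecMulVec b b with hB
  set H : Matrix (Fin n) (Fin n) ℝ := Matrix.vecMulVec h h with hH
  have hKstar : Kstar = K * (1 - B) := by
    rw [hKs, ha, neg_vecMulVec', mul_sub, mul_one, hB, mul_vecMulVec']
    abel
  have hP : P = K⁻¹ * (1 - c • H) := by
    rw [hPdef, hdagdef, smul_vecMulVec', ← hH, mul_sub, mul_one, Matrix.mul_smul]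
  have hBB : B * B = B := by
    rw [hB, vecMulVec_mul', vecMul_vecMulVec', hbb, one_smul]
  -- E1 : P * Kstar = 1 - B
  have s1 : (1 - c • H) * K = K - c • Matrix.vecMulVec h b := by
    rw [sub_mul, one_mul, Matrix.smul_mul, hH, vecMulVec_mul', hvhK]
  have s2 : K⁻¹ * (K - c • Matrix.vecMulVec h b)
      = 1 - c • Matrix.vecMulVec (K⁻¹.mulVec h) b := by
    rw [mul_sub, hKinv, Matrix.mul_smul, mul_vecMulVec']
  have sGB : Matrix.vecMulVec (K⁻¹.mulVec h) b * (1 - B) = 0 := by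
    rw [mul_sub, mul_one, hB, vecMulVec_mul', vecMul_vecMulVec', hbb, one_smul, sub_self]
  have E1 : P * Kstar = 1 - B := by
    rw [hP, hKstar, ← mul_assoc, mul_assoc K⁻¹, s1, s2, sub_mul, one_mul,
      Matrix.smul_mul, sGB, smul_zero, sub_zero]
  -- E2 : Kstar * P = 1 - c • H
  have s4 : (1 - B) * K⁻¹ = K⁻¹ - Matrix.vecMulVec b h := by
    rw [sub_mul, one_mul, hB, vecMulVec_mul', ← hh]
  have s5 : K * (K⁻¹ - Matrix.vecMulVec b h) = 1 - Matrix.vecMulVec (K.mulVec b) h := by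
    rw [mul_sub, hKinv', mul_vecMulVec']
  have sWH : Matrix.vecMulVec (K.mulVec b) h * (c • H)
      = Matrix.vecMulVec (K.mulVec b) h := by
    rw [Matrix.mul_smul, hH, vecMulVec_mul', vecMul_vecMulVec', _root_.vecMulVec_smul',
      smul_smul, hch, one_smul]
  have E2 : Kstar * P = 1 - c • H := by
    rw [hKstar, hP, ← mul_assoc, mul_assoc K, s4, s5, sub_mul, one_mul,
      mul_sub, mul_one, sWH, sub_self, sub_zero]
  -- Moore-Penrose conditions
  have mp1 : Kstar * P * Kstar = Kstar := by
    have h1B : (1 - B) * (1 - B) = 1 - B := by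
      rw [sub_mul, one_mul, mul_sub, mul_one, hBB, sub_self, sub_zero]
    rw [mul_assoc, E1, hKstar, mul_assoc, h1B]
  have hbP : Matrix.vecMul b P = 0 := by
    rw [hPdef, Matrix.vecMul_sub, ← Matrix.vecMul_vecMul, ← hh, vecMul_vecMulVec',
      hdagdef, dotProduct_smul, smul_eq_mul, hch, one_smul, sub_self]
  have mp2 : P * Kstar * P = P := by
    rw [E1, sub_mul, one_mul, hB, vecMulVec_mul', hbP, vecMulVec_zero', sub_zero]
  have mp3 : (Kstar * P)ᵀ = Kstar * P := by
    rw [E2, Matrix.transpose_sub, Matrix.transpose_one, Matrix.transpose_smul, hH,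
      vecMulVec_transpose']
  have mp4 : (P * Kstar)ᵀ = P * Kstar := by
    rw [E1, Matrix.transpose_sub, Matrix.transpose_one, hB, vecMulVec_transpose']
  exact ⟨claim1, claim2, ⟨mp1, mp2, mp3, mp4⟩, E1⟩
end

section
/- Let K ∈ ℝ^{n×n} be symmetric positive definite, b the i-th standard basis vector, and K_{S_i} the matrix K with i-th row and column zeroed. Then K^{-1} − (K_{S_i})^† = ((K^{-1})_{ii})^{-1} hᵀh, where h = bᵀK^{-1} is the i-th row of K^{-1}. In particular ‖K^{-1} − (K_{S_i})^†‖_op = ‖h‖²/(K^{-1})_{ii}. -/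
open Matrix RealInnerProductSpace

/-- Operator norm of a matrix with respect to Euclidean norms. -/
noncomputable def opNorm {m n : ℕ} (A : Matrix (Fin m) (Fin n) ℝ) : ℝ :=
  ‖LinearMap.toContinuousLinearMap (Matrix.toEuclideanLin A)‖

theorem mp_unique {n : ℕ} {A P Q : Matrix (Fin n) (Fin n) ℝ}
    (hP : IsMoorePenrose A P) (hQ : IsMoorePenrose A Q) : P = Q := by
  obtain ⟨hP1, hP2, hP3, hP4⟩ := hP
  obtain ⟨hQ1, hQ2, hQ3, hQ4⟩ := hQ
  have hAQ1 : A * Q = (A * P) * (A * Q) := by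
    conv_lhs => rw [← hP1]
    noncomm_ring
  have hAP1 : A * P = (A * Q) * (A * P) := by
    conv_lhs => rw [← hQ1]
    noncomm_ring
  have hAP2 : A * P = (A * P) * (A * Q) := by
    conv_lhs => rw [← hP3, hAP1, transpose_mul, hP3, hQ3]
  have hAP : A * P = A * Q := hAP2.trans hAQ1.symm
  have hPA1 : P * A = (P * A) * (Q * A) := by
    conv_lhs => rw [← hQ1]
    noncomm_ring
  have hQA1 : Q * A = (Q * A) * (P * A) := by
    conv_lhs => rw [← hP1]
    noncomm_ring
  have hPA2 : P * A = (Q * A) * (P * A) := by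
    conv_lhs => rw [← hP4, hPA1, transpose_mul, hP4, hQ4]
  have hPA : P * A = Q * A := hPA2.trans hQA1.symm
  calc P = P * A * P := hP2.symm
    _ = Q * A * P := by rw [hPA]
    _ = Q * (A * P) := by rw [mul_assoc]
    _ = Q * (A * Q) := by rw [hAP]
    _ = Q * A * Q := by rw [mul_assoc]
    _ = Q := hQ2

theorem rank_one_opNorm {n : ℕ} (h : Fin n → ℝ) (c : ℝ) (hc : 0 ≤ c) (hne : h ≠ 0) :
    opNorm (c • Matrix.vecMulVec h h) = c * ∑ j, h j ^ 2 := by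
  set u : EuclideanSpace ℝ (Fin n) := (WithLp.equiv 2 _).symm h with hu
  set L := LinearMap.toContinuousLinearMap (Matrix.toEuclideanLin (c • Matrix.vecMulVec h h))
    with hL
  have hvv : ∀ y : Fin n → ℝ, Matrix.vecMulVec h h *ᵥ y = (h ⬝ᵥ y) • h := by
    intro y
    ext j
    simp only [Matrix.mulVec, dotProduct, Matrix.vecMulVec_apply, Pi.smul_apply, smul_eq_mul]
    rw [Finset.sum_mul]
    exact Finset.sum_congr rfl fun k _ => by ring
  have hmv : ∀ y : Fin n → ℝ, (c • Matrix.vecMulVec h h) *ᵥ y = (c * (h ⬝ᵥ y)) • h := by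
    intro y
    rw [Matrix.smul_mulVec, hvv, smul_smul]
  have hip : ∀ x : EuclideanSpace ℝ (Fin n),
      ⟪u, x⟫ = h ⬝ᵥ (WithLp.equiv 2 (Fin n → ℝ) x) := by
    intro x
    simp [hu, PiLp.inner_apply, RCLike.inner_apply, dotProduct]
    exact Finset.sum_congr rfl fun _ _ => mul_comm _ _
  have hLx : ∀ x : EuclideanSpace ℝ (Fin n), L x = (c * ⟪u, x⟫) • u := by
    intro x
    have h1 : L x = (WithLp.equiv 2 (Fin n → ℝ)).symm
        ((c • Matrix.vecMulVec h h) *ᵥ (WithLp.equiv 2 (Fin n → ℝ)) x) := by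
      simp [hL, Matrix.toEuclideanLin_apply, Matrix.smul_mulVec, WithLp.toLp_smul]
    rw [h1, hmv, hip]
    ext j
    simp [hu]
  have hu2 : ⟪u, u⟫ = ∑ j, h j ^ 2 := by
    rw [hu]; simp only [PiLp.inner_apply, RCLike.inner_apply, conj_trivial, sq]; simp
  have hnorm2 : ‖u‖ ^ 2 = ∑ j, h j ^ 2 := by
    rw [← hu2, real_inner_self_eq_norm_sq]
  have hune : u ≠ 0 := by
    intro h0
    apply hne
    ext j
    have := congrFun (congrArg (WithLp.equiv 2 (Fin n → ℝ)) h0) j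
    simpa [hu] using this
  have hupos : 0 < ‖u‖ := norm_pos_iff.mpr hune
  have key : ‖L‖ = c * ‖u‖ ^ 2 := by
    apply le_antisymm
    · apply ContinuousLinearMap.opNorm_le_bound _ (by positivity)
      intro x
      rw [hLx x, norm_smul]
      have h1 : |⟪u, x⟫| ≤ ‖u‖ * ‖x‖ := abs_real_inner_le_norm u x
      have h2 : ‖c * ⟪u, x⟫‖ = c * |⟪u, x⟫| := by
        rw [Real.norm_eq_abs, abs_mul, abs_of_nonneg hc]
      rw [h2]
      nlinarith [mul_le_mul_of_nonneg_right (mul_le_mul_of_nonneg_left h1 hc) (norm_nonneg u)]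
    · have h1 := L.le_opNorm u
      rw [hLx u, norm_smul, real_inner_self_eq_norm_sq] at h1
      have h2 : ‖c * ‖u‖ ^ 2‖ = c * ‖u‖ ^ 2 := by
        rw [Real.norm_eq_abs, abs_of_nonneg (by positivity)]
      rw [h2] at h1
      exact le_of_mul_le_mul_right h1 hupos
  rw [opNorm, ← hL, key, hnorm2]

/-- For `K` symmetric positive definite and `K_{S_i}` the matrix `K` with `i`-th row and
column zeroed: `K⁻¹ − (K_{S_i})^† = ((K⁻¹)_{ii})⁻¹ hᵀh` where `h = bᵀK⁻¹` is the `i`-th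
row of `K⁻¹`; in particular `‖K⁻¹ − (K_{S_i})^†‖_op = ‖h‖²/(K⁻¹)_{ii}`. -/
theorem pinv_loo_difference {n : ℕ} (K : Matrix (Fin n) (Fin n) ℝ)
    (hK : K.PosDef) (i : Fin n) (P : Matrix (Fin n) (Fin n) ℝ)
    (hP : IsMoorePenrose
      (Matrix.of fun j k => if j = i ∨ k = i then (0 : ℝ) else K j k) P) :
    let h : Fin n → ℝ := Matrix.vecMul (Pi.single i 1) K⁻¹
    K⁻¹ - P = (K⁻¹ i i)⁻¹ • Matrix.vecMulVec h h ∧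
    opNorm (K⁻¹ - P) = (∑ j, h j ^ 2) / K⁻¹ i i := by
  intro h
  set J := K⁻¹ with hJdef
  have hh : h = J i := by
    simp [h, hJdef, Matrix.single_one_vecMul]; rfl
  have hJpd : J.PosDef := hK.inv
  have hsy : ∀ j k, J j k = J k j := fun j k => by
    have := hJpd.isHermitian.apply k j
    simpa using this
  have hKJ : K * J = 1 := Matrix.mul_nonsing_inv _ hK.det_pos.ne'.isUnit
  have hJK : J * K = 1 := Matrix.nonsing_inv_mul _ hK.det_pos.ne'.isUnit
  have hα : 0 < J i i := by
    have := hJpd.dotProduct_mulVec_pos (x := Pi.single i 1)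
      (by simp [Function.ne_iff])
    simpa [dotProduct, Pi.single_apply, mulVec] using this
  set α := J i i with hαdef
  set c := α⁻¹ with hcdef
  have hc : 0 ≤ c := inv_nonneg.mpr hα.le
  have hcα : c * α = 1 := inv_mul_cancel₀ hα.ne'
  set E : Matrix (Fin n) (Fin n) ℝ := single i i 1 with hE
  have hEE : E * E = E := by simp [hE]
  have hET : Eᵀ = E := by
    ext j k
    simp [hE, Matrix.transpose_apply, Matrix.single, and_comm]
  have hEJE : E * J * E = α • E := by
    ext j k
    by_cases hj : j = i <;> by_cases hk : k = i <;>
      simp [hE, hj, hk, Ne.symm, hαdef]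
  set A : Matrix (Fin n) (Fin n) ℝ :=
    Matrix.of fun j k => if j = i ∨ k = i then (0 : ℝ) else K j k with hAset
  have hrow : ∀ M : Matrix (Fin n) (Fin n) ℝ,
      (1 - E) * M = of fun j k => if j = i then 0 else M j k := by
    intro M
    ext j k
    by_cases hj : j = i <;> simp [sub_mul, hE, hj]
  have hcol : ∀ M : Matrix (Fin n) (Fin n) ℝ,
      M * (1 - E) = of fun j k => if k = i then 0 else M j k := by
    intro M
    ext j k
    by_cases hk : k = i <;> simp [mul_sub, hE, hk]
  have hA : A = (1 - E) * K * (1 - E) := by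
    rw [hrow, hcol]
    ext j k
    by_cases hj : j = i <;> by_cases hk : k = i <;> simp [hAset, hj, hk]
  set Q : Matrix (Fin n) (Fin n) ℝ := J - c • (J * E * J) with hQdef
  -- vecMulVec h h = J * E * J
  have hvv : Matrix.vecMulVec h h = J * E * J := by
    ext j k
    rw [Matrix.vecMulVec_apply, hh]
    have : (J * E * J) j k = (J * E) j i * J i k := by
      rw [Matrix.mul_apply]
      rw [Finset.sum_eq_single i]
      · intro b _ hb
        rw [Matrix.mul_single_apply_of_ne _ _ _ _ _ hb, zero_mul]
      · simp
    rw [this, Matrix.mul_single_apply_same, mul_one]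
    rw [hsy i j]
  have f1 : E * (J * E * J) = α • (E * J) := by
    rw [← mul_assoc, ← mul_assoc, hEJE, Matrix.smul_mul]
  have f2 : (J * E * J) * E = α • (J * E) := by
    rw [mul_assoc (J * E) J E, mul_assoc J E (J * E), ← mul_assoc E J E, hEJE,
      Matrix.mul_smul]
  have EQ : E * Q = 0 := by
    rw [hQdef, mul_sub, Matrix.mul_smul, f1, smul_smul, hcα, one_smul, sub_self]
  have QE : Q * E = 0 := by
    rw [hQdef, sub_mul, Matrix.smul_mul, f2, smul_smul, hcα, one_smul, sub_self]
  have KQ : K * Q = 1 - c • (E * J) := by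
    rw [hQdef, mul_sub, hKJ, Matrix.mul_smul, ← mul_assoc, ← mul_assoc, hKJ, one_mul]
  have QK : Q * K = 1 - c • (J * E) := by
    rw [hQdef, sub_mul, hJK, Matrix.smul_mul, mul_assoc, hJK, mul_one]
  have oE : (1 - E) * Q = Q := by rw [sub_mul, one_mul, EQ, sub_zero]
  have Qo : Q * (1 - E) = Q := by rw [mul_sub, mul_one, QE, sub_zero]
  have g1 : (1 - E) * (E * J) = 0 := by
    rw [sub_mul, one_mul, ← mul_assoc, hEE, sub_self]
  have g2 : (J * E) * (1 - E) = 0 := by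
    rw [mul_sub, mul_one, mul_assoc, hEE, sub_self]
  have AQ : A * Q = 1 - E := by
    calc A * Q = ((1 - E) * K) * ((1 - E) * Q) := by rw [hA, mul_assoc]
      _ = (1 - E) * (K * Q) := by rw [oE, mul_assoc]
      _ = (1 - E) - c • ((1 - E) * (E * J)) := by
          rw [KQ, mul_sub, mul_one, Matrix.mul_smul]
      _ = 1 - E := by rw [g1, smul_zero, sub_zero]
  have QA : Q * A = 1 - E := by
    calc Q * A = Q * (((1 - E) * K) * (1 - E)) := by rw [hA]
      _ = (Q * ((1 - E) * K)) * (1 - E) := by rw [← mul_assoc]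
      _ = ((Q * (1 - E)) * K) * (1 - E) := by rw [mul_assoc Q (1 - E) K]
      _ = (Q * K) * (1 - E) := by rw [Qo]
      _ = (1 - E) - c • ((J * E) * (1 - E)) := by
          rw [QK, sub_mul, one_mul, Matrix.smul_mul]
      _ = 1 - E := by rw [g2, smul_zero, sub_zero]
  have oo : (1 - E) * (1 - E) = 1 - E := by
    rw [sub_mul, one_mul, mul_sub, mul_one, hEE, sub_self, sub_zero]
  have hQmp : IsMoorePenrose A Q := by
    refine ⟨?_, ?_, ?_, ?_⟩
    · rw [AQ, hA, ← mul_assoc, ← mul_assoc, oo]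
    · rw [QA, oE]
    · rw [AQ, transpose_sub, transpose_one, hET]
    · rw [QA, transpose_sub, transpose_one, hET]
  have hPQ : P = Q := mp_unique hP hQmp
  have hdiff : J - P = c • Matrix.vecMulVec h h := by
    rw [hPQ, hQdef, hvv]
    abel
  constructor
  · exact hdiff
  · rw [hdiff, rank_one_opNorm h c hc]
    · rw [hcdef, div_eq_inv_mul]
    · intro h0
      have : h i = 0 := by rw [h0]; rfl
      rw [hh] at this
      exact hα.ne' this
end

section
/- Let X ∈ ℝ^{d×n} have rank n, let X_i be X with its i-th column zeroed, y ∈ ℝ^n, y_i the vector y with i-th entry zeroed. Let w_S^† and w_{S_i}^† be the minimum norm solutions (w_S^†)ᵀ = yᵀX^† and (w_{S_i}^†)ᵀ = y_iᵀ(X_i)^†. Then ‖w_S^† − w_{S_i}^†‖ ≤ ‖X^†‖_op · ‖y‖. -/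
open Matrix

/-- Euclidean norm of a vector. -/
noncomputable def enorm {n : ℕ} (v : Fin n → ℝ) : ℝ :=
  Real.sqrt (∑ i, v i ^ 2)

lemma enorm_nonneg' {n : ℕ} (v : Fin n → ℝ) : 0 ≤ _root_.enorm v := Real.sqrt_nonneg _

lemma enorm_mulVec_le {m n : ℕ} (A : Matrix (Fin m) (Fin n) ℝ) (v : Fin n → ℝ) :
    _root_.enorm (A *ᵥ v) ≤ opNorm A * _root_.enorm v := by
  have h := (LinearMap.toContinuousLinearMap (Matrix.toEuclideanLin A)).le_opNorm
      ((WithLp.equiv 2 (Fin n → ℝ)).symm v)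
  simp only [LinearMap.coe_toContinuousLinearMap', toEuclideanLin_apply_piLp_toLp] at h
  rw [EuclideanSpace.norm_eq, EuclideanSpace.norm_eq] at h
  simpa [_root_.enorm, opNorm, Real.norm_eq_abs, sq_abs] using h

lemma dotProduct_le_enorm {n : ℕ} (v u : Fin n → ℝ) :
    v ⬝ᵥ u ≤ _root_.enorm v * _root_.enorm u := by
  have h := real_inner_le_norm ((WithLp.equiv 2 (Fin n → ℝ)).symm v)
      ((WithLp.equiv 2 (Fin n → ℝ)).symm u)
  rw [EuclideanSpace.norm_eq, EuclideanSpace.norm_eq] at h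
  simpa [_root_.enorm, PiLp.inner_apply, RCLike.inner_apply, dotProduct, Real.norm_eq_abs, sq_abs, mul_comm] using h

lemma enorm_vecMul_le {m n : ℕ} (A : Matrix (Fin m) (Fin n) ℝ) (y : Fin m → ℝ) :
    _root_.enorm (Matrix.vecMul y A) ≤ opNorm A * _root_.enorm y := by
  set u := Matrix.vecMul y A with hu
  set t := _root_.enorm u with ht
  have htn : 0 ≤ t := enorm_nonneg' _
  have hsq : t ^ 2 = u ⬝ᵥ u := by
    rw [ht, _root_.enorm, Real.sq_sqrt]
    · simp [dotProduct, sq]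
    · exact Finset.sum_nonneg fun k _ => sq_nonneg _
  have h1 : u ⬝ᵥ u = y ⬝ᵥ (A *ᵥ u) := (Matrix.dotProduct_mulVec y A u).symm
  have h2 : y ⬝ᵥ (A *ᵥ u) ≤ _root_.enorm y * (opNorm A * t) :=
    le_trans (dotProduct_le_enorm y (A *ᵥ u))
      (mul_le_mul_of_nonneg_left (enorm_mulVec_le A u) (enorm_nonneg' y))
  have key : t ^ 2 ≤ (opNorm A * _root_.enorm y) * t := by
    rw [hsq, h1]; nlinarith [h2]
  rcases eq_or_lt_of_le htn with h | h
  · rw [← h]; exact mul_nonneg (norm_nonneg _) (enorm_nonneg' _)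
  · nlinarith [key, h]


/-- Stability of minimum norm solutions to linear regression: if `X ∈ ℝ^{d×n}` has rank
`n`, `X_i` is `X` with its `i`-th column zeroed and `y_i` is `y` with `i`-th entry zeroed,
then the minimum norm solutions `(w_S^†)ᵀ = yᵀX^†` and `(w_{S_i}^†)ᵀ = y_iᵀ(X_i)^†`
satisfy `‖w_S^† − w_{S_i}^†‖ ≤ ‖X^†‖_op‖y‖`. -/
theorem linear_min_norm_stability {d n : ℕ} (X : Matrix (Fin d) (Fin n) ℝ)
    (hX : LinearIndependent ℝ fun j : Fin n => Xᵀ j)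
    (i : Fin n) (y : Fin n → ℝ)
    (B Bi : Matrix (Fin n) (Fin d) ℝ)
    (hB : IsMoorePenrose X B)
    (hBi : IsMoorePenrose (Matrix.of fun r c => if c = i then (0 : ℝ) else X r c) Bi) :
    _root_.enorm (Matrix.vecMul y B - Matrix.vecMul (Function.update y i 0) Bi)
      ≤ opNorm B * _root_.enorm y := by
  set Xi : Matrix (Fin d) (Fin n) ℝ := Matrix.of fun r c => if c = i then (0 : ℝ) else X r c
    with hXidef
  -- injectivity of mulVec X
  have hinj : ∀ v : Fin n → ℝ, X *ᵥ v = 0 → v = 0 := by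
    intro v hv
    rw [Fintype.linearIndependent_iff] at hX
    funext j
    refine hX v ?_ j
    funext r
    have : (∑ j, v j • Xᵀ j) r = (X *ᵥ v) r := by
      simp [Matrix.mulVec, dotProduct, Finset.sum_apply, transpose_apply, mul_comm]
    rw [hv] at this
    simpa using this
  -- B * X = 1
  have hBX : B * X = 1 := by
    have hmv : ∀ v : Fin n → ℝ, (B * X) *ᵥ v = v := by
      intro v
      have h0 : X *ᵥ ((B * X) *ᵥ v - v) = 0 := by
        rw [Matrix.mulVec_sub, Matrix.mulVec_mulVec, ← Matrix.mul_assoc, hB.1, sub_self]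
      have := hinj _ h0
      have := sub_eq_zero.mp this
      exact this
    ext a b
    have := congrFun (hmv (Pi.single b 1)) a
    simpa [Matrix.mulVec, dotProduct, Pi.single_apply, Matrix.one_apply, eq_comm,
      mul_comm] using this
  -- row i of Bi is zero
  have hrow : ∀ k, Bi i k = 0 := by
    have hXicol : ∀ m, Xi m i = 0 := fun m => by simp [hXidef]
    have hBiXi : ∀ k, (Bi * Xi) i k = 0 := by
      intro k
      have hsymm := hBi.2.2.2  -- (Bi * Xi)ᵀ = Bi * Xi
      have : (Bi * Xi) i k = (Bi * Xi) k i := by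
        conv_lhs => rw [← hsymm]
        simp [transpose_apply]
      rw [this, Matrix.mul_apply]
      simp [hXicol]
    intro k
    have h2 := hBi.2.1  -- Bi * Xi * Bi = Bi
    have : Bi i k = (Bi * Xi * Bi) i k := by rw [h2]
    rw [this, Matrix.mul_apply]
    simp only [hBiXi, zero_mul, Finset.sum_const_zero]
  -- B * Xi computed
  have hBXi : ∀ a b, (B * Xi) a b = if b = i then 0 else (1 : Matrix (Fin n) (Fin n) ℝ) a b := by
    intro a b
    by_cases hb : b = i
    · subst hb
      rw [Matrix.mul_apply]
      simp [hXidef]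
    · have : (B * Xi) a b = (B * X) a b := by
        rw [Matrix.mul_apply, Matrix.mul_apply]
        refine Finset.sum_congr rfl fun k _ => ?_
        simp [hXidef, hb]
      rw [this, hBX, if_neg hb]
  -- (B * Xi) * Bi = Bi
  have hBXiBi : B * Xi * Bi = Bi := by
    ext a k
    rw [Matrix.mul_apply]
    by_cases ha : a = i
    · rw [ha, hrow k]
      refine Finset.sum_eq_zero fun b _ => ?_
      rw [hBXi]
      rcases eq_or_ne b i with hb | hb
      · rw [if_pos hb, zero_mul]
      · rw [if_neg hb, Matrix.one_apply_ne (Ne.symm hb), zero_mul]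
    · rw [Finset.sum_eq_single a]
      · rw [hBXi, if_neg ha, Matrix.one_apply_eq, one_mul]
      · intro b _ hba
        rw [hBXi]
        rcases eq_or_ne b i with hb | hb
        · rw [if_pos hb, zero_mul]
        · rw [if_neg hb, Matrix.one_apply_ne (Ne.symm hba), zero_mul]
      · intro h; exact absurd (Finset.mem_univ a) h
  -- Biᵀ = Xi * (Bi * Biᵀ)
  have hBit : Biᵀ = Xi * (Bi * Biᵀ) := by
    have h2 := hBi.2.1  -- Bi * Xi * Bi = Bi
    have h3 := hBi.2.2.1  -- (Xi * Bi)ᵀ = Xi * Bi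
    calc Biᵀ = (Bi * Xi * Bi)ᵀ := by rw [h2]
    _ = (Bi * (Xi * Bi))ᵀ := by rw [Matrix.mul_assoc]
    _ = (Xi * Bi)ᵀ * Biᵀ := by rw [Matrix.transpose_mul]
    _ = (Xi * Bi) * Biᵀ := by rw [h3]
    _ = Xi * (Bi * Biᵀ) := by rw [Matrix.mul_assoc]
  -- key identity
  have key : B * Biᵀ = Bi * Biᵀ := by
    calc B * Biᵀ = B * (Xi * (Bi * Biᵀ)) := by rw [← hBit]
    _ = (B * Xi * Bi) * Biᵀ := by rw [← Matrix.mul_assoc, ← Matrix.mul_assoc, Matrix.mul_assoc]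
    _ = Bi * Biᵀ := by rw [hBXiBi]
  -- update step
  have hupd : Matrix.vecMul (Function.update y i 0) Bi = Matrix.vecMul y Bi := by
    funext k
    simp only [Matrix.vecMul, dotProduct]
    refine Finset.sum_congr rfl fun j _ => ?_
    by_cases hj : j = i
    · subst hj; rw [hrow k]; simp
    · rw [Function.update_of_ne hj]
  rw [hupd]
  set w := Matrix.vecMul y B with hw
  set wi := Matrix.vecMul y Bi with hwi
  -- cross term
  have hcross : w ⬝ᵥ wi = wi ⬝ᵥ wi := by
    have h1 : w ⬝ᵥ wi = y ⬝ᵥ ((B * Biᵀ) *ᵥ y) := by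
      rw [hw, ← Matrix.dotProduct_mulVec, ← Matrix.mulVec_mulVec, Matrix.mulVec_transpose, ← hwi]
    have h2 : wi ⬝ᵥ wi = y ⬝ᵥ ((Bi * Biᵀ) *ᵥ y) := by
      rw [hwi, ← Matrix.dotProduct_mulVec, ← Matrix.mulVec_mulVec, Matrix.mulVec_transpose]
    rw [h1, h2, key]
  -- sum inequality
  have hsum : ∑ k, (w k - wi k) ^ 2 ≤ ∑ k, w k ^ 2 := by
    have expand : ∀ k : Fin d, (w k - wi k) ^ 2
        = w k ^ 2 - 2 * (w k * wi k) + wi k * wi k := fun k => by ring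
    rw [Finset.sum_congr rfl fun k _ => expand k, Finset.sum_add_distrib,
      Finset.sum_sub_distrib, ← Finset.mul_sum]
    have hc : (∑ k, w k * wi k) = ∑ k, wi k * wi k := hcross
    have hpos : 0 ≤ ∑ k, wi k * wi k := Finset.sum_nonneg fun k _ => mul_self_nonneg _
    linarith
  calc _root_.enorm (w - wi) ≤ _root_.enorm w := by
        simp only [_root_.enorm]
        exact Real.sqrt_le_sqrt (by simpa using hsum)
  _ ≤ opNorm B * _root_.enorm y := enorm_vecMul_le B y
end
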